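/- Let n ≥ 2 and u ∈ ℕ^n. The number of monomials of multidegree u in K[x_1,y_1,z_1,...,x_n,y_n,z_n] not lying in the monomial ideal N_n = ⟨x_i y_k : i < k⟩ + ⟨x_i z_j x_k, y_i z_j y_k, y_i z_j x_k : i < j < k⟩ equals C(u_1+...+u_n+3, 3) - Σ_{i=1}^n C(u_i+2, 3). -/

import Mathlib

open Finset

namespace Stmt2Aux

def pad {n : ℕ} (f : Fin n → ℕ) : ℕ → ℕ := fun j => if h : j < n then f ⟨j, h⟩ else 0

def UU {n : ℕ} (u : Fin n → ℕ) (i : ℕ) : ℕ := ∑ j ∈ range i, pad u j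

variable {n : ℕ} (u : Fin n → ℕ)

lemma UU_succ (i : ℕ) : UU u (i + 1) = UU u i + pad u i := by
  simp [UU, sum_range_succ]

lemma UU_mono {i j : ℕ} (h : i ≤ j) : UU u i ≤ UU u j :=
  sum_le_sum_of_subset (range_subset_range.2 h)

lemma pad_eq (i : Fin n) : pad u i.1 = u i := by simp [pad]

lemma pad_lt {f : Fin n → ℕ} {j : ℕ} (h : pad f j ≠ 0) : j < n := by
  by_contra hj; simp [pad, hj] at h

lemma UU_n : UU u n = ∑ i, u i := by
  rw [UU, ← Fin.sum_univ_eq_sum_range]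
  exact sum_congr rfl fun i _ => pad_eq u i

lemma sum_fin_eq (f : Fin n → ℕ) : ∑ i, f i = ∑ j ∈ range n, pad f j := by
  rw [← Fin.sum_univ_eq_sum_range]
  exact sum_congr rfl fun i _ => (pad_eq f i).symm

abbrev Tri (n : ℕ) := (Fin n → ℕ) × (Fin n → ℕ) × (Fin n → ℕ)

def Std (t : Tri n) : Prop :=
  (∀ i, t.1 i + t.2.1 i + t.2.2 i = u i) ∧
  ¬ (∃ i k, i < k ∧ 1 ≤ t.1 i ∧ 1 ≤ t.2.1 k) ∧
  ¬ (∃ i j k, i < j ∧ j < k ∧ 1 ≤ t.1 i ∧ 1 ≤ t.2.2 j ∧ 1 ≤ t.1 k) ∧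
  ¬ (∃ i j k, i < j ∧ j < k ∧ 1 ≤ t.2.1 i ∧ 1 ≤ t.2.2 j ∧ 1 ≤ t.2.1 k) ∧
  ¬ (∃ i j k, i < j ∧ j < k ∧ 1 ≤ t.2.1 i ∧ 1 ≤ t.2.2 j ∧ 1 ≤ t.1 k)

def pA (w x y i : ℕ) : ℕ := min (w + x + y) (UU u (i + 1)) - max (w + x) (UU u i)

def pB (w x i : ℕ) : ℕ := min (w + x) (UU u (i + 1)) - max w (UU u i)

def phi (w x y : ℕ) : Tri n :=
  (fun i => pA u w x y i.1, fun i => pB u w x i.1,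
   fun i => u i - pA u w x y i.1 - pB u w x i.1)

def psi (_u : Fin n → ℕ) (t : Tri n) : ℕ × ℕ × ℕ :=
  (∑ i, if (∀ j, j < i → t.1 j + t.2.1 j = 0) then t.2.2 i else 0,
   ∑ i, t.2.1 i, ∑ i, t.1 i)

def TT : Finset (ℕ × ℕ × ℕ) :=
  (range (∑ i, u i + 1) ×ˢ range (∑ i, u i + 1) ×ˢ range (∑ i, u i + 1)).filter
    (fun t => t.1 + t.2.1 + t.2.2 ≤ ∑ i, u i)

def isBad (t : ℕ × ℕ × ℕ) : Prop :=
  ∃ i, i < n ∧ UU u i ≤ t.1 ∧ t.1 + t.2.1 + t.2.2 < UU u (i + 1)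

instance : DecidablePred (isBad u) := fun t => by unfold isBad; infer_instance

def Good : Finset (ℕ × ℕ × ℕ) := TT u |>.filter (fun t => ¬ isBad u t)

def Bad : Finset (ℕ × ℕ × ℕ) := TT u |>.filter (isBad u)

lemma pA_pB_le (w x y i : ℕ) : pA u w x y i + pB u w x i ≤ pad u i := by
  have h := UU_succ u i; unfold pA pB; omega

lemma phi_std (w x y : ℕ) : Std u (phi u w x y) := by
  refine ⟨?_, ?_, ?_, ?_, ?_⟩
  · intro i
    have h := pA_pB_le u w x y i.1
    rw [pad_eq] at h
    simp only [phi]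
    omega
  · rintro ⟨i, k, hik, h1, h2⟩
    rw [Fin.lt_def] at hik
    simp only [phi] at h1 h2
    have hm : UU u (i.1 + 1) ≤ UU u k.1 := UU_mono u (by omega)
    simp only [pA, pB] at h1 h2
    omega
  · rintro ⟨i, j, k, hij, hjk, h1, h2, h3⟩
    rw [Fin.lt_def] at hij hjk
    simp only [phi] at h1 h2 h3
    have hm1 : UU u (i.1 + 1) ≤ UU u j.1 := UU_mono u (by omega)
    have hm2 : UU u (j.1 + 1) ≤ UU u k.1 := UU_mono u (by omega)
    have hj := UU_succ u j.1
    have hpj := pad_eq u j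
    simp only [pA, pB] at h1 h2 h3
    omega
  · rintro ⟨i, j, k, hij, hjk, h1, h2, h3⟩
    rw [Fin.lt_def] at hij hjk
    simp only [phi] at h1 h2 h3
    have hm1 : UU u (i.1 + 1) ≤ UU u j.1 := UU_mono u (by omega)
    have hm2 : UU u (j.1 + 1) ≤ UU u k.1 := UU_mono u (by omega)
    have hj := UU_succ u j.1
    have hpj := pad_eq u j
    simp only [pA, pB] at h1 h2 h3
    omega
  · rintro ⟨i, j, k, hij, hjk, h1, h2, h3⟩
    rw [Fin.lt_def] at hij hjk
    simp only [phi] at h1 h2 h3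
    have hm1 : UU u (i.1 + 1) ≤ UU u j.1 := UU_mono u (by omega)
    have hm2 : UU u (j.1 + 1) ≤ UU u k.1 := UU_mono u (by omega)
    have hj := UU_succ u j.1
    have hpj := pad_eq u j
    simp only [pA, pB] at h1 h2 h3
    omega

lemma sum_pA (w x y : ℕ) (hS : w + x + y ≤ ∑ i, u i) :
    ∑ j ∈ range n, pA u w x y j = y := by
  have hg : Monotone (fun i => max (w + x) (min (w + x + y) (UU u i))) := by
    intro i j hij
    have := UU_mono u hij
    simp only
    omega
  have ht : ∀ j ∈ range n, pA u w x y j =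
      max (w + x) (min (w + x + y) (UU u (j + 1))) -
      max (w + x) (min (w + x + y) (UU u j)) := by
    intro j _
    have := UU_succ u j
    simp only [pA]
    omega
  have h0 : UU u 0 = 0 := by simp [UU]
  have hn' : UU u n = ∑ i, u i := UU_n u
  calc ∑ j ∈ range n, pA u w x y j
      = ∑ j ∈ range n, (max (w + x) (min (w + x + y) (UU u (j + 1))) -
          max (w + x) (min (w + x + y) (UU u j))) := sum_congr rfl ht
    _ = max (w + x) (min (w + x + y) (UU u n)) -
          max (w + x) (min (w + x + y) (UU u 0)) := sum_range_tsub hg n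
    _ = y := by omega

lemma sum_pB (w x : ℕ) (hS : w + x ≤ ∑ i, u i) :
    ∑ j ∈ range n, pB u w x j = x := by
  have hg : Monotone (fun i => max w (min (w + x) (UU u i))) := by
    intro i j hij
    have := UU_mono u hij
    simp only
    omega
  have ht : ∀ j ∈ range n, pB u w x j =
      max w (min (w + x) (UU u (j + 1))) - max w (min (w + x) (UU u j)) := by
    intro j _
    have := UU_succ u j
    simp only [pB]
    omega
  have h0 : UU u 0 = 0 := by simp [UU]
  have hn' : UU u n = ∑ i, u i := UU_n u
  calc ∑ j ∈ range n, pB u w x j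
      = ∑ j ∈ range n, (max w (min (w + x) (UU u (j + 1))) -
          max w (min (w + x) (UU u j))) := sum_congr rfl ht
    _ = max w (min (w + x) (UU u n)) - max w (min (w + x) (UU u 0)) := sum_range_tsub hg n
    _ = x := by omega

lemma sum_cond_eq (f : Fin n → ℕ) (p : Fin n → Prop) [DecidablePred p] (m : ℕ) (hm : m < n)
    (hp : ∀ i : Fin n, p i ↔ i.1 ≤ m) :
    ∑ i, (if p i then f i else 0) = (∑ j ∈ range m, pad f j) + pad f m := by
  have hz : ∀ j ∈ range n, j ∉ range (m + 1) →
      pad (fun i => if p i then f i else 0) j = 0 := by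
    intro j hj1 hj2
    simp only [mem_range] at hj1 hj2
    simp only [pad, dif_pos hj1]
    rw [if_neg]
    intro hpj
    exact hj2 (by have := (hp ⟨j, hj1⟩).1 hpj; simp at this; omega)
  have he : ∀ j ∈ range (m + 1), pad (fun i => if p i then f i else 0) j = pad f j := by
    intro j hj
    simp only [mem_range] at hj
    have hjn : j < n := by omega
    simp only [pad, dif_pos hjn]
    rw [if_pos]
    exact (hp ⟨j, hjn⟩).2 (by simp; omega)
  calc ∑ i, (if p i then f i else 0)
      = ∑ j ∈ range n, pad (fun i => if p i then f i else 0) j := sum_fin_eq _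
    _ = ∑ j ∈ range (m + 1), pad (fun i => if p i then f i else 0) j :=
        (sum_subset (range_subset_range.2 hm) hz).symm
    _ = ∑ j ∈ range (m + 1), pad f j := sum_congr rfl he
    _ = (∑ j ∈ range m, pad f j) + pad f m := by rw [sum_range_succ]

lemma exists_interval (w : ℕ) (hw : w < UU u n) : ∃ i < n, UU u i ≤ w ∧ w < UU u (i + 1) := by
  classical
  set i := Nat.findGreatest (fun j => UU u j ≤ w) n with hidef
  have hPi : UU u i ≤ w := Nat.findGreatest_spec (P := fun j => UU u j ≤ w) (Nat.zero_le n)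
    (by simp [UU])
  have hin : i ≤ n := Nat.findGreatest_le n
  have hi : i < n := by
    rcases Nat.lt_or_ge i n with h | h
    · exact h
    · exfalso; have : i = n := by omega
      rw [this] at hPi; omega
  refine ⟨i, hi, hPi, ?_⟩
  have := Nat.findGreatest_is_greatest (P := fun j => UU u j ≤ w) (n := n)
    (k := i + 1) (by omega) (by omega)
  omega


lemma std_sum' {t : Tri n} (hstd : Std u t) (j : ℕ) :
    pad t.1 j + pad t.2.1 j + pad t.2.2 j = pad u j := by
  by_cases h : j < n
  · simp only [pad, dif_pos h]; exact hstd.1 ⟨j, h⟩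
  · simp [pad, h]

lemma std_ab {t : Tri n} (hstd : Std u t) (i k : ℕ) (h : i < k) :
    pad t.1 i = 0 ∨ pad t.2.1 k = 0 := by
  by_cases hk : k < n
  · have hi : i < n := by omega
    by_contra hc
    push_neg at hc
    refine hstd.2.1 ⟨⟨i, hi⟩, ⟨k, hk⟩, by simpa [Fin.mk_lt_mk], ?_, ?_⟩
    · have := hc.1; simp only [pad, dif_pos hi] at this; omega
    · have := hc.2; simp only [pad, dif_pos hk] at this; omega
  · right; simp [pad, hk]

lemma std_aca {t : Tri n} (hstd : Std u t) (i j k : ℕ) (h1 : i < j) (h2 : j < k) :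
    pad t.1 i = 0 ∨ pad t.2.2 j = 0 ∨ pad t.1 k = 0 := by
  by_cases hk : k < n
  · have hi : i < n := by omega
    have hj : j < n := by omega
    by_contra hc
    push_neg at hc
    refine hstd.2.2.1 ⟨⟨i, hi⟩, ⟨j, hj⟩, ⟨k, hk⟩, by simpa [Fin.mk_lt_mk],
      by simpa [Fin.mk_lt_mk], ?_, ?_, ?_⟩
    · have := hc.1; simp only [pad, dif_pos hi] at this; omega
    · have := hc.2.1; simp only [pad, dif_pos hj] at this; omega
    · have := hc.2.2; simp only [pad, dif_pos hk] at this; omega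
  · right; right; simp [pad, hk]

lemma std_bcb {t : Tri n} (hstd : Std u t) (i j k : ℕ) (h1 : i < j) (h2 : j < k) :
    pad t.2.1 i = 0 ∨ pad t.2.2 j = 0 ∨ pad t.2.1 k = 0 := by
  by_cases hk : k < n
  · have hi : i < n := by omega
    have hj : j < n := by omega
    by_contra hc
    push_neg at hc
    refine hstd.2.2.2.1 ⟨⟨i, hi⟩, ⟨j, hj⟩, ⟨k, hk⟩, by simpa [Fin.mk_lt_mk],
      by simpa [Fin.mk_lt_mk], ?_, ?_, ?_⟩
    · have := hc.1; simp only [pad, dif_pos hi] at this; omega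
    · have := hc.2.1; simp only [pad, dif_pos hj] at this; omega
    · have := hc.2.2; simp only [pad, dif_pos hk] at this; omega
  · right; right; simp [pad, hk]

lemma std_bca {t : Tri n} (hstd : Std u t) (i j k : ℕ) (h1 : i < j) (h2 : j < k) :
    pad t.2.1 i = 0 ∨ pad t.2.2 j = 0 ∨ pad t.1 k = 0 := by
  by_cases hk : k < n
  · have hi : i < n := by omega
    have hj : j < n := by omega
    by_contra hc
    push_neg at hc
    refine hstd.2.2.2.2 ⟨⟨i, hi⟩, ⟨j, hj⟩, ⟨k, hk⟩, by simpa [Fin.mk_lt_mk],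
      by simpa [Fin.mk_lt_mk], ?_, ?_, ?_⟩
    · have := hc.1; simp only [pad, dif_pos hi] at this; omega
    · have := hc.2.1; simp only [pad, dif_pos hj] at this; omega
    · have := hc.2.2; simp only [pad, dif_pos hk] at this; omega
  · right; right; simp [pad, hk]

lemma claim_b {t : Tri n} (hstd : Std u t) (m : ℕ) (hm : m < n)
    (hmin : ∀ j, j < m → pad t.1 j + pad t.2.1 j = 0) (hspec : pad t.1 m + pad t.2.1 m ≠ 0)
    (i : ℕ) (hi : i ≤ n) :
    max (UU u m + pad t.2.2 m) (min ((UU u m + pad t.2.2 m) + ∑ j ∈ range n, pad t.2.1 j)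
      (UU u i)) = (UU u m + pad t.2.2 m) + ∑ j ∈ range i, pad t.2.1 j := by
  set w := UU u m + pad t.2.2 m with hwdef
  set x := ∑ j ∈ range n, pad t.2.1 j with hxdef
  rcases le_or_gt i m with him | hmi
  · -- i ≤ m
    have hB0 : ∑ j ∈ range i, pad t.2.1 j = 0 :=
      sum_eq_zero (fun j hj => by have := hmin j (by simp only [mem_range] at hj; omega); omega)
    have hUi : UU u i ≤ UU u m := UU_mono u him
    omega
  · -- m < i
    have hUdec : UU u i = UU u m + pad u m + ∑ j ∈ Ico (m + 1) i, pad u j := by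
      have h1 : ∑ j ∈ Ico 0 m, pad u j + ∑ j ∈ Ico m i, pad u j = ∑ j ∈ Ico 0 i, pad u j :=
        sum_Ico_consecutive _ (by omega) (by omega)
      have h2 : ∑ j ∈ Ico m i, pad u j = pad u m + ∑ j ∈ Ico (m + 1) i, pad u j :=
        sum_eq_sum_Ico_succ_bot hmi _
      have h3 : UU u i = ∑ j ∈ Ico 0 i, pad u j := by rw [UU, range_eq_Ico]
      have h4 : UU u m = ∑ j ∈ Ico 0 m, pad u j := by rw [UU, range_eq_Ico]
      omega
    have hBdec : ∑ j ∈ range i, pad t.2.1 j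
        = pad t.2.1 m + ∑ j ∈ Ico (m + 1) i, pad t.2.1 j := by
      have h1 : ∑ j ∈ Ico 0 m, pad t.2.1 j + ∑ j ∈ Ico m i, pad t.2.1 j
          = ∑ j ∈ Ico 0 i, pad t.2.1 j := sum_Ico_consecutive _ (by omega) (by omega)
      have h2 : ∑ j ∈ Ico m i, pad t.2.1 j
          = pad t.2.1 m + ∑ j ∈ Ico (m + 1) i, pad t.2.1 j := sum_eq_sum_Ico_succ_bot hmi _
      have h3 : ∑ j ∈ Ico 0 m, pad t.2.1 j = 0 :=
        sum_eq_zero (fun j hj => by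
          have := hmin j (by simp only [mem_Ico] at hj; omega); omega)
      have h4 : ∑ j ∈ range i, pad t.2.1 j = ∑ j ∈ Ico 0 i, pad t.2.1 j := by rw [range_eq_Ico]
      omega
    have hxsplit : x = ∑ j ∈ range i, pad t.2.1 j + ∑ j ∈ Ico i n, pad t.2.1 j := by
      have h1 : ∑ j ∈ Ico 0 i, pad t.2.1 j + ∑ j ∈ Ico i n, pad t.2.1 j
          = ∑ j ∈ Ico 0 n, pad t.2.1 j := sum_Ico_consecutive _ (by omega) (by omega)
      have h4 : ∑ j ∈ range i, pad t.2.1 j = ∑ j ∈ Ico 0 i, pad t.2.1 j := by rw [range_eq_Ico]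
      have h5 : x = ∑ j ∈ Ico 0 n, pad t.2.1 j := by rw [hxdef, range_eq_Ico]
      omega
    have halpha : w + ∑ j ∈ range i, pad t.2.1 j ≤ UU u i := by
      have h1 : ∑ j ∈ Ico (m + 1) i, pad t.2.1 j ≤ ∑ j ∈ Ico (m + 1) i, pad u j :=
        sum_le_sum (fun j _ => by have := std_sum' u hstd j; omega)
      have h2 := std_sum' u hstd m
      omega
    have key : ∀ k, i ≤ k → pad t.2.1 k ≠ 0 →
        UU u i = w + ∑ j ∈ range i, pad t.2.1 j := by
      intro k hik hbk
      have hA0 : ∀ j, j < k → pad t.1 j = 0 :=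
        fun j hj => (std_ab u hstd j k hj).resolve_right hbk
      have hBm : pad t.2.1 m ≠ 0 := by have := hA0 m (by omega); omega
      have hC0 : ∀ j, m < j → j < k → pad t.2.2 j = 0 := fun j h1 h2 =>
        ((std_bcb u hstd m j k h1 h2).resolve_left hBm).resolve_right hbk
      have hterm : ∑ j ∈ Ico (m + 1) i, pad u j = ∑ j ∈ Ico (m + 1) i, pad t.2.1 j := by
        refine sum_congr rfl (fun j hj => ?_)
        simp only [mem_Ico] at hj
        have h1 := std_sum' u hstd j
        have h2 := hA0 j (by omega)
        have h3 := hC0 j (by omega) (by omega)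
        omega
      have h4 := std_sum' u hstd m
      have h5 := hA0 m (by omega)
      omega
    by_cases hQ : w + x ≤ UU u i
    · have hx0 : ∑ j ∈ Ico i n, pad t.2.1 j = 0 := by
        by_contra hc
        obtain ⟨k, hk1, hk2⟩ := exists_ne_zero_of_sum_ne_zero hc
        simp only [mem_Ico] at hk1
        have := key k hk1.1 hk2
        have hone : pad t.2.1 k ≤ ∑ j ∈ Ico i n, pad t.2.1 j :=
          single_le_sum (f := fun j => pad t.2.1 j) (fun j _ => Nat.zero_le _)
            (mem_Ico.2 hk1)
        omega
      omega
    · push_neg at hQ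
      have hex : ∑ j ∈ Ico i n, pad t.2.1 j ≠ 0 := by
        intro hzero
        omega
      obtain ⟨k, hk1, hk2⟩ := exists_ne_zero_of_sum_ne_zero hex
      simp only [mem_Ico] at hk1
      have := key k hk1.1 hk2
      omega

lemma claim_a {t : Tri n} (hstd : Std u t) (m : ℕ) (hm : m < n)
    (hmin : ∀ j, j < m → pad t.1 j + pad t.2.1 j = 0) (hspec : pad t.1 m + pad t.2.1 m ≠ 0)
    (i : ℕ) (hi : i ≤ n) :
    max ((UU u m + pad t.2.2 m) + ∑ j ∈ range n, pad t.2.1 j)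
      (min (((UU u m + pad t.2.2 m) + ∑ j ∈ range n, pad t.2.1 j) + ∑ j ∈ range n, pad t.1 j)
      (UU u i))
    = ((UU u m + pad t.2.2 m) + ∑ j ∈ range n, pad t.2.1 j) + ∑ j ∈ range i, pad t.1 j := by
  set w := UU u m + pad t.2.2 m with hwdef
  set x := ∑ j ∈ range n, pad t.2.1 j with hxdef
  set y := ∑ j ∈ range n, pad t.1 j with hydef
  rcases le_or_gt i m with him | hmi
  · have hA0 : ∑ j ∈ range i, pad t.1 j = 0 :=
      sum_eq_zero (fun j hj => by have := hmin j (by simp only [mem_range] at hj; omega); omega)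
    have hUi : UU u i ≤ UU u m := UU_mono u him
    omega
  · have hUdec : UU u i = UU u m + pad u m + ∑ j ∈ Ico (m + 1) i, pad u j := by
      have h1 : ∑ j ∈ Ico 0 m, pad u j + ∑ j ∈ Ico m i, pad u j = ∑ j ∈ Ico 0 i, pad u j :=
        sum_Ico_consecutive _ (by omega) (by omega)
      have h2 : ∑ j ∈ Ico m i, pad u j = pad u m + ∑ j ∈ Ico (m + 1) i, pad u j :=
        sum_eq_sum_Ico_succ_bot hmi _
      have h3 : UU u i = ∑ j ∈ Ico 0 i, pad u j := by rw [UU, range_eq_Ico]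
      have h4 : UU u m = ∑ j ∈ Ico 0 m, pad u j := by rw [UU, range_eq_Ico]
      omega
    have hBdec : ∑ j ∈ range i, pad t.2.1 j
        = pad t.2.1 m + ∑ j ∈ Ico (m + 1) i, pad t.2.1 j := by
      have h1 : ∑ j ∈ Ico 0 m, pad t.2.1 j + ∑ j ∈ Ico m i, pad t.2.1 j
          = ∑ j ∈ Ico 0 i, pad t.2.1 j := sum_Ico_consecutive _ (by omega) (by omega)
      have h2 : ∑ j ∈ Ico m i, pad t.2.1 j
          = pad t.2.1 m + ∑ j ∈ Ico (m + 1) i, pad t.2.1 j := sum_eq_sum_Ico_succ_bot hmi _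
      have h3 : ∑ j ∈ Ico 0 m, pad t.2.1 j = 0 :=
        sum_eq_zero (fun j hj => by
          have := hmin j (by simp only [mem_Ico] at hj; omega); omega)
      have h4 : ∑ j ∈ range i, pad t.2.1 j = ∑ j ∈ Ico 0 i, pad t.2.1 j := by rw [range_eq_Ico]
      omega
    have hAdec : ∑ j ∈ range i, pad t.1 j
        = pad t.1 m + ∑ j ∈ Ico (m + 1) i, pad t.1 j := by
      have h1 : ∑ j ∈ Ico 0 m, pad t.1 j + ∑ j ∈ Ico m i, pad t.1 j
          = ∑ j ∈ Ico 0 i, pad t.1 j := sum_Ico_consecutive _ (by omega) (by omega)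
      have h2 : ∑ j ∈ Ico m i, pad t.1 j
          = pad t.1 m + ∑ j ∈ Ico (m + 1) i, pad t.1 j := sum_eq_sum_Ico_succ_bot hmi _
      have h3 : ∑ j ∈ Ico 0 m, pad t.1 j = 0 :=
        sum_eq_zero (fun j hj => by
          have := hmin j (by simp only [mem_Ico] at hj; omega); omega)
      have h4 : ∑ j ∈ range i, pad t.1 j = ∑ j ∈ Ico 0 i, pad t.1 j := by rw [range_eq_Ico]
      omega
    have hxsplit : x = ∑ j ∈ range i, pad t.2.1 j + ∑ j ∈ Ico i n, pad t.2.1 j := by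
      have h1 : ∑ j ∈ Ico 0 i, pad t.2.1 j + ∑ j ∈ Ico i n, pad t.2.1 j
          = ∑ j ∈ Ico 0 n, pad t.2.1 j := sum_Ico_consecutive _ (by omega) (by omega)
      have h4 : ∑ j ∈ range i, pad t.2.1 j = ∑ j ∈ Ico 0 i, pad t.2.1 j := by rw [range_eq_Ico]
      have h5 : x = ∑ j ∈ Ico 0 n, pad t.2.1 j := by rw [hxdef, range_eq_Ico]
      omega
    have hysplit : y = ∑ j ∈ range i, pad t.1 j + ∑ j ∈ Ico i n, pad t.1 j := by
      have h1 : ∑ j ∈ Ico 0 i, pad t.1 j + ∑ j ∈ Ico i n, pad t.1 j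
          = ∑ j ∈ Ico 0 n, pad t.1 j := sum_Ico_consecutive _ (by omega) (by omega)
      have h4 : ∑ j ∈ range i, pad t.1 j = ∑ j ∈ Ico 0 i, pad t.1 j := by rw [range_eq_Ico]
      have h5 : y = ∑ j ∈ Ico 0 n, pad t.1 j := by rw [hydef, range_eq_Ico]
      omega
    have halphab : w + ∑ j ∈ range i, pad t.2.1 j ≤ UU u i := by
      have h1 : ∑ j ∈ Ico (m + 1) i, pad t.2.1 j ≤ ∑ j ∈ Ico (m + 1) i, pad u j :=
        sum_le_sum (fun j _ => by have := std_sum' u hstd j; omega)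
      have h2 := std_sum' u hstd m
      omega
    have keyb : ∀ k, i ≤ k → pad t.2.1 k ≠ 0 →
        UU u i = w + ∑ j ∈ range i, pad t.2.1 j := by
      intro k hik hbk
      have hA0 : ∀ j, j < k → pad t.1 j = 0 :=
        fun j hj => (std_ab u hstd j k hj).resolve_right hbk
      have hBm : pad t.2.1 m ≠ 0 := by have := hA0 m (by omega); omega
      have hC0 : ∀ j, m < j → j < k → pad t.2.2 j = 0 := fun j h1 h2 =>
        ((std_bcb u hstd m j k h1 h2).resolve_left hBm).resolve_right hbk
      have hterm : ∑ j ∈ Ico (m + 1) i, pad u j = ∑ j ∈ Ico (m + 1) i, pad t.2.1 j := by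
        refine sum_congr rfl (fun j hj => ?_)
        simp only [mem_Ico] at hj
        have h1 := std_sum' u hstd j
        have h2 := hA0 j (by omega)
        have h3 := hC0 j (by omega) (by omega)
        omega
      have h4 := std_sum' u hstd m
      have h5 := hA0 m (by omega)
      omega
    have hCmid : ∀ k, i ≤ k → pad t.1 k ≠ 0 → ∀ j, m < j → j < i → pad t.2.2 j = 0 := by
      intro k hik hak j h1 h2
      rcases Nat.eq_zero_or_pos (pad t.1 m) with hAm | hAm
      · have hBm : pad t.2.1 m ≠ 0 := by omega
        exact ((std_bca u hstd m j k h1 (by omega)).resolve_left hBm).resolve_right hak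
      · exact ((std_aca u hstd m j k h1 (by omega)).resolve_left (by omega)).resolve_right hak
    by_cases hR : w + x + y ≤ UU u i
    · -- show tail of a is zero
      have hy0 : ∑ j ∈ Ico i n, pad t.1 j = 0 := by
        by_contra hc
        obtain ⟨k, hk1, hk2⟩ := exists_ne_zero_of_sum_ne_zero hc
        simp only [mem_Ico] at hk1
        have hterm : ∑ j ∈ Ico (m + 1) i, pad u j
            = ∑ j ∈ Ico (m + 1) i, (pad t.1 j + pad t.2.1 j) := by
          refine sum_congr rfl (fun j hj => ?_)
          simp only [mem_Ico] at hj
          have h1 := std_sum' u hstd j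
          have h3 := hCmid k hk1.1 hk2 j (by omega) (by omega)
          omega
        have hsplitsum : ∑ j ∈ Ico (m + 1) i, (pad t.1 j + pad t.2.1 j)
            = ∑ j ∈ Ico (m + 1) i, pad t.1 j + ∑ j ∈ Ico (m + 1) i, pad t.2.1 j :=
          sum_add_distrib
        have h4 := std_sum' u hstd m
        have hone : pad t.1 k ≤ ∑ j ∈ Ico i n, pad t.1 j :=
          single_le_sum (f := fun j => pad t.1 j) (fun j _ => Nat.zero_le _) (mem_Ico.2 hk1)
        -- UU u i = w + Bsum i + Asum i, and hR gives contradiction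
        omega
      omega
    · push_neg at hR
      by_cases hQ2 : UU u i ≤ w + x
      · -- Asum i = 0
        have hA0 : ∑ j ∈ range i, pad t.1 j = 0 := by
          by_contra hc
          obtain ⟨j', hj'1, hj'2⟩ := exists_ne_zero_of_sum_ne_zero hc
          simp only [mem_range] at hj'1
          by_cases htb : ∑ j ∈ Ico i n, pad t.2.1 j = 0
          · -- then UU u i = w + Bsum i so A-terms vanish
            have hQ2' : w + ∑ j ∈ range i, pad t.2.1 j = UU u i := by omega
            -- expand: forces pad t.1 m = 0 and mid a+c = 0
            have h4 := std_sum' u hstd m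
            have h1 : ∑ j ∈ Ico (m + 1) i, pad t.2.1 j ≤ ∑ j ∈ Ico (m + 1) i, pad u j :=
              sum_le_sum (fun j _ => by have := std_sum' u hstd j; omega)
            -- per-term equality needed: mid sums equal implies each pad u j = pad t.2.1 j
            have h2 : ∑ j ∈ Ico (m + 1) i, pad u j = ∑ j ∈ Ico (m + 1) i, pad t.2.1 j := by
              omega
            have h3 : ∀ j ∈ Ico (m + 1) i, pad u j = pad t.2.1 j := by
              have := (sum_eq_sum_iff_of_le
                (fun j hj => by have := std_sum' u hstd j; omega)).1 h2.symm
              intro j hj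
              exact ((this j hj)).symm
            -- now pad t.1 j' = 0 for all j' < i
            rcases Nat.lt_or_ge j' m with hj'm | hj'm
            · have := hmin j' hj'm; omega
            · rcases Nat.eq_or_lt_of_le hj'm with hj'e | hj'gt
              · -- j' = m : pad t.1 m must be 0 from hQ2' expansion
                have := std_sum' u hstd j'
                subst hj'e
                omega
              · have hj'mem : j' ∈ Ico (m + 1) i := mem_Ico.2 ⟨by omega, hj'1⟩
                have := h3 j' hj'mem
                have := std_sum' u hstd j'
                omega
          · obtain ⟨k, hk1, hk2⟩ := exists_ne_zero_of_sum_ne_zero htb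
            simp only [mem_Ico] at hk1
            exact hj'2 ((std_ab u hstd j' k (by omega)).resolve_right hk2)
        omega
      · push_neg at hQ2
        -- Q < UU u i < R : show tail-b = 0 and mid-c = 0
        have htb : ∑ j ∈ Ico i n, pad t.2.1 j = 0 := by
          by_contra hc
          obtain ⟨k, hk1, hk2⟩ := exists_ne_zero_of_sum_ne_zero hc
          simp only [mem_Ico] at hk1
          have := keyb k hk1.1 hk2
          omega
        have hmidc : ∑ j ∈ Ico (m + 1) i, pad t.2.2 j = 0 := by
          by_contra hc
          obtain ⟨j', hj'1, hj'2⟩ := exists_ne_zero_of_sum_ne_zero hc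
          simp only [mem_Ico] at hj'1
          -- need a k ≥ i with pad t.1 k ≠ 0
          have hta : ∑ j ∈ Ico i n, pad t.1 j ≠ 0 := by
            intro hzero
            -- then y = Asum i, UU u i < R forces contradiction
            have h1 : ∑ j ∈ Ico (m + 1) i, (pad t.1 j + pad t.2.1 j + pad t.2.2 j)
                = ∑ j ∈ Ico (m + 1) i, pad u j :=
              sum_congr rfl (fun j _ => std_sum' u hstd j)
            have h2 : ∑ j ∈ Ico (m + 1) i, (pad t.1 j + pad t.2.1 j + pad t.2.2 j)
                = ∑ j ∈ Ico (m + 1) i, pad t.1 j + ∑ j ∈ Ico (m + 1) i, pad t.2.1 j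
                  + ∑ j ∈ Ico (m + 1) i, pad t.2.2 j := by
              rw [sum_add_distrib, sum_add_distrib]
            have h4 := std_sum' u hstd m
            omega
          obtain ⟨k, hk1, hk2⟩ := exists_ne_zero_of_sum_ne_zero hta
          simp only [mem_Ico] at hk1
          exact hj'2 (hCmid k hk1.1 hk2 j' (by omega) (by omega))
        -- conclude UU u i = w + x + Asum i
        have h1 : ∑ j ∈ Ico (m + 1) i, (pad t.1 j + pad t.2.1 j + pad t.2.2 j)
            = ∑ j ∈ Ico (m + 1) i, pad u j :=
          sum_congr rfl (fun j _ => std_sum' u hstd j)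
        have h2 : ∑ j ∈ Ico (m + 1) i, (pad t.1 j + pad t.2.1 j + pad t.2.2 j)
            = ∑ j ∈ Ico (m + 1) i, pad t.1 j + ∑ j ∈ Ico (m + 1) i, pad t.2.1 j
              + ∑ j ∈ Ico (m + 1) i, pad t.2.2 j := by
          rw [sum_add_distrib, sum_add_distrib]
        have h4 := std_sum' u hstd m
        omega

lemma psi_x (t : Tri n) : (psi u t).2.1 = ∑ j ∈ range n, pad t.2.1 j := sum_fin_eq _

lemma psi_y (t : Tri n) : (psi u t).2.2 = ∑ j ∈ range n, pad t.1 j := sum_fin_eq _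

lemma psi_w_all {t : Tri n} (hstd : Std u t) (hall : ∀ j : ℕ, pad t.1 j + pad t.2.1 j = 0) :
    (psi u t).1 = ∑ i, u i := by
  have hab : ∀ j : Fin n, t.1 j = 0 ∧ t.2.1 j = 0 := by
    intro j
    have := hall j.1
    rw [pad_eq, pad_eq] at this
    omega
  calc (psi u t).1
      = ∑ i, if (∀ j, j < i → t.1 j + t.2.1 j = 0) then t.2.2 i else 0 := rfl
    _ = ∑ i, t.2.2 i := by
        refine sum_congr rfl (fun i _ => ?_)
        rw [if_pos]
        intro j _
        have := hab j
        omega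
    _ = ∑ i, u i := by
        refine sum_congr rfl (fun i _ => ?_)
        have h1 := hstd.1 i
        have h2 := hab i
        omega

lemma psi_w_find {t : Tri n} (hstd : Std u t) (m : ℕ) (hm : m < n)
    (hmin : ∀ j, j < m → pad t.1 j + pad t.2.1 j = 0)
    (hspec : pad t.1 m + pad t.2.1 m ≠ 0) :
    (psi u t).1 = UU u m + pad t.2.2 m := by
  have hp : ∀ i : Fin n, (∀ j, j < i → t.1 j + t.2.1 j = 0) ↔ i.1 ≤ m := by
    intro i
    constructor
    · intro hcond
      by_contra hc
      have hlt : (⟨m, hm⟩ : Fin n) < i := by rw [Fin.lt_def]; simp; omega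
      have := hcond ⟨m, hm⟩ hlt
      have h1 := pad_eq t.1 (⟨m, hm⟩ : Fin n)
      have h2 := pad_eq t.2.1 (⟨m, hm⟩ : Fin n)
      simp only at h1 h2
      omega
    · intro hle j hj
      rw [Fin.lt_def] at hj
      have := hmin j.1 (by omega)
      rw [pad_eq, pad_eq] at this
      omega
  rw [show (psi u t).1 = ∑ i, if (∀ j, j < i → t.1 j + t.2.1 j = 0) then t.2.2 i else 0 from rfl,
    sum_cond_eq t.2.2 _ m hm hp]
  congr 1
  rw [UU]
  refine sum_congr rfl (fun j hj => ?_)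
  simp only [mem_range] at hj
  have h1 := std_sum' u hstd j
  have h2 := hmin j hj
  omega

lemma psi_good {t : Tri n} (hstd : Std u t) : psi u t ∈ Good u := by
  have hyx := psi_x u t
  have hyy := psi_y u t
  have hsumabc : ∑ i, (t.1 i + t.2.1 i + t.2.2 i) = ∑ i, u i := sum_congr rfl (fun i _ => hstd.1 i)
  have hsums : ∑ i, t.1 i + ∑ i, t.2.1 i + ∑ i, t.2.2 i = ∑ i, u i := by
    rw [← hsumabc, sum_add_distrib, sum_add_distrib]
  have hwle : (psi u t).1 ≤ ∑ i, t.2.2 i := by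
    rw [show (psi u t).1
      = ∑ i, if (∀ j, j < i → t.1 j + t.2.1 j = 0) then t.2.2 i else 0 from rfl]
    exact sum_le_sum (fun i _ => by split <;> omega)
  have hx' : (psi u t).2.1 = ∑ i, t.2.1 i := rfl
  have hy' : (psi u t).2.2 = ∑ i, t.1 i := rfl
  have hT : (psi u t).1 + (psi u t).2.1 + (psi u t).2.2 ≤ ∑ i, u i :=
    le_trans (Nat.add_le_add (Nat.add_le_add hwle hx'.le) hy'.le) (by omega)
  rw [Good, mem_filter]
  refine ⟨?_, ?_⟩
  · simp only [TT, mem_filter, mem_product, mem_range]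
    omega
  · rintro ⟨i, hi, hUi, hlt⟩
    by_cases hex : ∃ j : ℕ, pad t.1 j + pad t.2.1 j ≠ 0
    · obtain ⟨j0, hj0⟩ := hex
      have hex' : ∃ j : ℕ, pad t.1 j + pad t.2.1 j ≠ 0 := ⟨j0, hj0⟩
      classical
      set m := Nat.find hex' with hmdef
      have hspec : pad t.1 m + pad t.2.1 m ≠ 0 := Nat.find_spec hex'
      have hm : m < n := by
        by_contra hc
        simp [pad, show ¬ m < n from hc] at hspec
      have hmin : ∀ j, j < m → pad t.1 j + pad t.2.1 j = 0 := by
        intro j hj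
        have := Nat.find_min hex' hj
        omega
      have hw := psi_w_find u hstd m hm hmin hspec
      have hcs := std_sum' u hstd m
      have hUsm := UU_succ u m
      -- i = m
      have him : i = m := by
        rcases lt_trichotomy i m with h | h | h
        · have := UU_mono u (show i + 1 ≤ m by omega)
          omega
        · exact h
        · have := UU_mono u (show m + 1 ≤ i by omega)
          omega
      subst him
      have hbm : pad t.2.1 m ≤ ∑ j ∈ range n, pad t.2.1 j :=
        single_le_sum (f := fun j => pad t.2.1 j) (fun j _ => Nat.zero_le _)
          (mem_range.2 hm)
      have ham : pad t.1 m ≤ ∑ j ∈ range n, pad t.1 j :=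
        single_le_sum (f := fun j => pad t.1 j) (fun j _ => Nat.zero_le _)
          (mem_range.2 hm)
      omega
    · push_neg at hex
      have hall : ∀ j : ℕ, pad t.1 j + pad t.2.1 j = 0 := fun j => hex j
      have hw := psi_w_all u hstd hall
      have hx0 : (psi u t).2.1 = 0 := by
        rw [hyx]
        exact sum_eq_zero (fun j _ => by have := hall j; omega)
      have hy0 : (psi u t).2.2 = 0 := by
        rw [hyy]
        exact sum_eq_zero (fun j _ => by have := hall j; omega)
      have h1 : UU u (i + 1) ≤ UU u n := UU_mono u (by omega)
      have h2 := UU_n u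
      omega

lemma phi_psi {t : Tri n} (hstd : Std u t) :
    phi u (psi u t).1 (psi u t).2.1 (psi u t).2.2 = t := by
  have hyx := psi_x u t
  have hyy := psi_y u t
  by_cases hex : ∃ j : ℕ, pad t.1 j + pad t.2.1 j ≠ 0
  · classical
    set m := Nat.find hex with hmdef
    have hspec : pad t.1 m + pad t.2.1 m ≠ 0 := Nat.find_spec hex
    have hm : m < n := by
      by_contra hc
      simp [pad, show ¬ m < n from hc] at hspec
    have hmin : ∀ j, j < m → pad t.1 j + pad t.2.1 j = 0 := by
      intro j hj
      have := Nat.find_min hex hj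
      omega
    have hw := psi_w_find u hstd m hm hmin hspec
    have hA : ∀ i : Fin n, pA u (UU u m + pad t.2.2 m) (∑ j ∈ range n, pad t.2.1 j)
        (∑ j ∈ range n, pad t.1 j) i.1 = t.1 i := by
      intro i
      have hc1 := claim_a u hstd m hm hmin hspec i.1 (le_of_lt i.2)
      have hc2 := claim_a u hstd m hm hmin hspec (i.1 + 1) i.2
      have hUs := UU_succ u i.1
      have hrs : ∑ j ∈ range (i.1 + 1), pad t.1 j
          = ∑ j ∈ range i.1, pad t.1 j + pad t.1 i.1 := sum_range_succ _ _
      have hpe := pad_eq t.1 i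
      simp only [pA]
      omega
    have hB : ∀ i : Fin n, pB u (UU u m + pad t.2.2 m) (∑ j ∈ range n, pad t.2.1 j) i.1
        = t.2.1 i := by
      intro i
      have hc1 := claim_b u hstd m hm hmin hspec i.1 (le_of_lt i.2)
      have hc2 := claim_b u hstd m hm hmin hspec (i.1 + 1) i.2
      have hUs := UU_succ u i.1
      have hrs : ∑ j ∈ range (i.1 + 1), pad t.2.1 j
          = ∑ j ∈ range i.1, pad t.2.1 j + pad t.2.1 i.1 := sum_range_succ _ _
      have hpe := pad_eq t.2.1 i
      simp only [pB]
      omega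
    rw [hw, hyx, hyy]
    unfold phi
    refine Prod.ext (funext fun i => hA i) (Prod.ext (funext fun i => hB i) (funext fun i => ?_))
    have h1 := hA i
    have h2 := hB i
    have h3 := hstd.1 i
    simp only at h1 h2 ⊢
    omega
  · push_neg at hex
    have hall : ∀ j : ℕ, pad t.1 j + pad t.2.1 j = 0 := fun j => hex j
    have hw := psi_w_all u hstd hall
    have hx0 : (psi u t).2.1 = 0 := by
      rw [hyx]; exact sum_eq_zero (fun j _ => by have := hall j; omega)
    have hy0 : (psi u t).2.2 = 0 := by
      rw [hyy]; exact sum_eq_zero (fun j _ => by have := hall j; omega)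
    rw [hw, hx0, hy0]
    unfold phi
    have hcomp : ∀ i : Fin n, pA u (∑ i, u i) 0 0 i.1 = t.1 i ∧
        pB u (∑ i, u i) 0 i.1 = t.2.1 i := by
      intro i
      have h1 : UU u (i.1 + 1) ≤ UU u n := UU_mono u i.2
      have h2 := UU_n u
      have h3 := UU_succ u i.1
      have h4 := hall i.1
      have h5 := pad_eq t.1 i
      have h6 := pad_eq t.2.1 i
      simp only [pA, pB]
      omega
    refine Prod.ext (funext fun i => (hcomp i).1)
      (Prod.ext (funext fun i => (hcomp i).2) (funext fun i => ?_))
    have h1 := (hcomp i).1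
    have h2 := (hcomp i).2
    have h3 := hstd.1 i
    simp only at h1 h2 ⊢
    omega

lemma psi_phi {s : ℕ × ℕ × ℕ} (hs : s ∈ Good u) :
    psi u (phi u s.1 s.2.1 s.2.2) = s := by
  obtain ⟨w, x, y⟩ := s
  rw [Good, mem_filter, TT, mem_filter, mem_product] at hs
  obtain ⟨⟨-, hT⟩, hnb⟩ := hs
  dsimp only at hT hnb ⊢
  have hx : (psi u (phi u w x y)).2.1 = x := by
    rw [show (psi u (phi u w x y)).2.1 = ∑ i : Fin n, pB u w x i.1 from rfl,
      Fin.sum_univ_eq_sum_range (fun j => pB u w x j) n]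
    exact sum_pB u w x (by omega)
  have hy : (psi u (phi u w x y)).2.2 = y := by
    rw [show (psi u (phi u w x y)).2.2 = ∑ i : Fin n, pA u w x y i.1 from rfl,
      Fin.sum_univ_eq_sum_range (fun j => pA u w x y j) n]
    exact sum_pA u w x y (by omega)
  have hw : (psi u (phi u w x y)).1 = w := by
    by_cases hxy : x + y = 0
    · -- all pA pB vanish
      have hz : ∀ j : ℕ, pA u w x y j = 0 ∧ pB u w x j = 0 := by
        intro j
        have := UU_succ u j
        simp only [pA, pB]
        omega
      have hweq : w = ∑ i, u i := by
        rcases Nat.lt_or_ge w (∑ i, u i) with hlt | hge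
        · exfalso
          obtain ⟨i, hi, h1, h2⟩ := exists_interval u w (by rw [UU_n]; exact hlt)
          exact hnb ⟨i, hi, h1, by dsimp only; omega⟩
        · omega
      calc (psi u (phi u w x y)).1
          = ∑ i, if (∀ j, j < i → (phi u w x y).1 j + (phi u w x y).2.1 j = 0)
              then (phi u w x y).2.2 i else 0 := rfl
        _ = ∑ i, u i := by
            refine sum_congr rfl (fun i _ => ?_)
            rw [if_pos]
            · show u i - pA u w x y i.1 - pB u w x i.1 = u i
              have := hz i.1
              omega
            · intro j _
              show pA u w x y j.1 + pB u w x j.1 = 0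
              have := hz j.1
              omega
        _ = w := hweq.symm
    · have hwS : w < UU u n := by rw [UU_n]; omega
      obtain ⟨m, hm, hUm, hwlt⟩ := exists_interval u w hwS
      have hR : UU u (m + 1) ≤ w + x + y := by
        by_contra hc
        exact hnb ⟨m, hm, hUm, by dsimp only; omega⟩
      have hUsm := UU_succ u m
      have hp : ∀ i : Fin n,
          (∀ j, j < i → (phi u w x y).1 j + (phi u w x y).2.1 j = 0) ↔ i.1 ≤ m := by
        intro i
        constructor
        · intro hcond
          by_contra hc
          have hlt : (⟨m, hm⟩ : Fin n) < i := by rw [Fin.lt_def]; simp; omega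
          have := hcond ⟨m, hm⟩ hlt
          simp only [phi] at this
          simp only [pA, pB] at this
          omega
        · intro hle j hj
          rw [Fin.lt_def] at hj
          have hj1 : UU u (j.1 + 1) ≤ UU u m := UU_mono u (by omega)
          show pA u w x y j.1 + pB u w x j.1 = 0
          have := UU_succ u j.1
          simp only [pA, pB]
          omega
      rw [show (psi u (phi u w x y)).1 = ∑ i, if (∀ j, j < i →
          (phi u w x y).1 j + (phi u w x y).2.1 j = 0) then (phi u w x y).2.2 i else 0 from rfl,
        sum_cond_eq (phi u w x y).2.2 _ m hm hp]
      have hterm : ∀ j, j < m → pad (phi u w x y).2.2 j = pad u j := by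
        intro j hj
        have hjn : j < n := by omega
        simp only [pad, dif_pos hjn]
        show u ⟨j, hjn⟩ - pA u w x y j - pB u w x j = u ⟨j, hjn⟩
        have h1 : UU u (j + 1) ≤ UU u m := UU_mono u (by omega)
        have := UU_succ u j
        simp only [pA, pB]
        omega
      have hlast : pad (phi u w x y).2.2 m = w - UU u m := by
        simp only [pad, dif_pos hm]
        show u ⟨m, hm⟩ - pA u w x y m - pB u w x m = w - UU u m
        have hpe : pad u m = u ⟨m, hm⟩ := by simp [pad, hm]
        simp only [pA, pB]
        omega
      rw [hlast, sum_congr rfl (fun j hj => hterm j (mem_range.1 hj))]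
      rw [show ∑ j ∈ range m, pad u j = UU u m from rfl]
      omega
  exact Prod.ext hw (Prod.ext hx hy)

lemma card_le2 (d B : ℕ) (h : d < B) :
    (((range B) ×ˢ (range B)).filter (fun p : ℕ × ℕ => p.1 + p.2 ≤ d)).card
      = (d + 2).choose 2 := by
  rw [card_eq_sum_card_fiberwise (f := Prod.fst) (t := (range B).filter (fun x => x ≤ d))]
  · have hfib : ∀ x ∈ (range B).filter (fun x => x ≤ d),
        ((((range B) ×ˢ (range B)).filter (fun p : ℕ × ℕ => p.1 + p.2 ≤ d)).filter
          (fun p => p.1 = x)).card = d + 1 - x := by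
      intro x hx
      simp only [mem_filter, mem_range] at hx
      rw [show d + 1 - x = (d - x) + 1 by omega, ← card_range ((d - x) + 1)]
      apply card_nbij' (i := fun p => p.2) (j := fun z => (x, z))
      · intro p hp
        simp only [mem_coe, mem_filter, mem_product, mem_range, and_true, true_and] at hp ⊢; omega
      · intro z hz
        simp only [mem_coe, mem_filter, mem_product, mem_range, and_true, true_and] at hz ⊢; omega
      · intro p hp; simp only [mem_coe, mem_filter] at hp
        exact Prod.ext hp.2.symm rfl
      · intro z _; rfl
    rw [sum_congr rfl hfib]
    calc ∑ x ∈ (range B).filter (fun x => x ≤ d), (d + 1 - x)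
        = ∑ x ∈ range (d + 1), (d + 1 - x) := by
          apply sum_congr; · ext a; simp only [mem_filter, mem_range]; omega
          · intros; rfl
      _ = ∑ m ∈ Icc 1 (d + 1), m.choose 1 := by
          apply sum_nbij' (i := fun x => d + 1 - x) (j := fun m => d + 1 - m)
          · intro a ha; simp only [mem_range] at ha; simp only [mem_Icc]; omega
          · intro m hm; simp only [mem_Icc] at hm; simp only [mem_range]; omega
          · intro a ha; simp only [mem_range] at ha; omega
          · intro m hm; simp only [mem_Icc] at hm; omega
          · intro a ha; simp [Nat.choose_one_right]
      _ = (d + 2).choose 2 := Nat.sum_Icc_choose _ _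
  · intro p hp
    simp only [mem_coe, mem_filter, mem_product, mem_range, and_true, true_and] at hp ⊢
    omega

lemma card_le3 (d B : ℕ) (h : d < B) :
    (((range B) ×ˢ (range B) ×ˢ (range B)).filter
      (fun p : ℕ × ℕ × ℕ => p.1 + p.2.1 + p.2.2 ≤ d)).card = (d + 3).choose 3 := by
  rw [card_eq_sum_card_fiberwise (f := Prod.fst) (t := (range B).filter (fun x => x ≤ d))]
  · have hfib : ∀ x ∈ (range B).filter (fun x => x ≤ d),
        ((((range B) ×ˢ (range B) ×ˢ (range B)).filter
          (fun p : ℕ × ℕ × ℕ => p.1 + p.2.1 + p.2.2 ≤ d)).filter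
          (fun p => p.1 = x)).card = (d - x + 2).choose 2 := by
      intro x hx
      simp only [mem_filter, mem_range] at hx
      rw [← card_le2 (d - x) B (by omega)]
      apply card_nbij' (i := fun p => p.2) (j := fun z => (x, z))
      · intro p hp
        simp only [mem_coe, mem_filter, mem_product, mem_range, and_true, true_and] at hp ⊢; omega
      · intro z hz
        simp only [mem_coe, mem_filter, mem_product, mem_range, and_true, true_and] at hz ⊢; omega
      · intro p hp; simp only [mem_coe, mem_filter] at hp
        exact Prod.ext hp.2.symm rfl
      · intro z _; rfl
    rw [sum_congr rfl hfib]
    calc ∑ x ∈ (range B).filter (fun x => x ≤ d), (d - x + 2).choose 2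
        = ∑ x ∈ range (d + 1), (d - x + 2).choose 2 := by
          apply sum_congr; · ext a; simp only [mem_filter, mem_range]; omega
          · intros; rfl
      _ = ∑ m ∈ Icc 2 (d + 2), m.choose 2 := by
          apply sum_nbij' (i := fun x => d - x + 2) (j := fun m => d + 2 - m)
          · intro a ha; simp only [mem_range] at ha; simp only [mem_Icc]; omega
          · intro m hm; simp only [mem_Icc] at hm; simp only [mem_range]; omega
          · intro a ha; simp only [mem_range] at ha; omega
          · intro m hm; simp only [mem_Icc] at hm; omega
          · intro a ha; rfl
      _ = (d + 3).choose 3 := Nat.sum_Icc_choose _ _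
  · intro p hp
    simp only [mem_coe, mem_filter, mem_product, mem_range, and_true, true_and] at hp ⊢
    omega

lemma card_lt3 (d B : ℕ) (h : d ≤ B) :
    (((range B) ×ˢ (range B) ×ˢ (range B)).filter
      (fun p : ℕ × ℕ × ℕ => p.1 + p.2.1 + p.2.2 < d)).card = (d + 2).choose 3 := by
  match d with
  | 0 =>
    rw [filter_false_of_mem (fun p _ => by omega), card_empty]
    decide
  | e + 1 =>
    rw [filter_congr (fun p _ => by omega :
      ∀ p ∈ (range B) ×ˢ (range B) ×ˢ (range B),
        (p.1 + p.2.1 + p.2.2 < e + 1) ↔ (p.1 + p.2.1 + p.2.2 ≤ e)),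
      card_le3 e B (by omega)]


lemma card_TT : (TT u).card = (∑ i, u i + 3).choose 3 :=
  card_le3 _ _ (Nat.lt_succ_self _)

lemma card_Bad : (Bad u).card = ∑ i, (u i + 2).choose 3 := by
  have hS : ∀ i, i ≤ n → UU u i ≤ ∑ j, u j := fun i hi => (UU_n u) ▸ UU_mono u hi
  have hBad : Bad u = (range n).biUnion (fun i => (TT u).filter
      (fun t => UU u i ≤ t.1 ∧ t.1 + t.2.1 + t.2.2 < UU u (i + 1))) := by
    ext t
    simp only [Bad, isBad, mem_filter, mem_biUnion, mem_range]
    constructor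
    · rintro ⟨ht, i, hi, h1, h2⟩; exact ⟨i, hi, ht, h1, h2⟩
    · rintro ⟨i, hi, ht, h1, h2⟩; exact ⟨ht, i, hi, h1, h2⟩
  rw [hBad, card_biUnion, ← Fin.sum_univ_eq_sum_range (fun j => _)]
  · apply Finset.sum_congr rfl
    intro i _
    have hi : i.1 < n := i.2
    have hU1 : UU u (i.1 + 1) = UU u i.1 + u i := by rw [UU_succ, pad_eq]
    have key : ((TT u).filter
        (fun t => UU u i.1 ≤ t.1 ∧ t.1 + t.2.1 + t.2.2 < UU u (i.1 + 1))).card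
        = (((range (∑ j, u j + 1)) ×ˢ (range (∑ j, u j + 1)) ×ˢ (range (∑ j, u j + 1))).filter
          (fun p : ℕ × ℕ × ℕ => p.1 + p.2.1 + p.2.2 < u i)).card := by
      apply card_nbij' (i := fun t => (t.1 - UU u i.1, t.2.1, t.2.2))
        (j := fun t => (t.1 + UU u i.1, t.2.1, t.2.2))
      · intro t ht
        simp only [TT, mem_coe, mem_filter, mem_product, mem_range, and_true, true_and] at ht ⊢
        omega
      · intro t ht
        have h1 : UU u (i.1 + 1) ≤ ∑ j, u j := hS _ (by omega)
        simp only [TT, mem_coe, mem_filter, mem_product, mem_range, and_true, true_and] at ht ⊢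
        omega
      · intro t ht
        simp only [TT, mem_coe, mem_filter, mem_product, mem_range, and_true, true_and] at ht
        have : t.1 - UU u i.1 + UU u i.1 = t.1 := by omega
        simp [this]
      · intro t ht; simp
    rw [key, card_lt3 _ _ ?_]
    have h1 : UU u (i.1 + 1) ≤ ∑ j, u j := hS _ (by omega)
    omega
  · intro a ha b hb hab
    simp only [mem_coe, mem_range] at ha hb
    simp only [Function.onFun, disjoint_left, mem_filter]
    rintro t ⟨-, h1, h2⟩ ⟨-, h3, h4⟩
    rcases Nat.lt_or_ge a b with h | h
    · have := UU_mono u (show a + 1 ≤ b by omega); omega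
    · rcases Nat.lt_or_ge b a with h' | h'
      · have := UU_mono u (show b + 1 ≤ a by omega); omega
      · exact hab (by omega)


lemma card_Good : (Good u).card = (∑ i, u i + 3).choose 3 - ∑ i, (u i + 2).choose 3 := by
  have h1 : Good u = TT u \ Bad u := by
    rw [Good, Bad, filter_not]
  rw [h1, card_sdiff_of_subset (show Bad u ⊆ TT u from filter_subset _ _), card_TT, card_Bad]

end Stmt2Aux

theorem stmt2 (n : ℕ) (hn : 2 ≤ n) (u : Fin n → ℕ) :
    Nat.card {t : (Fin n → ℕ) × (Fin n → ℕ) × (Fin n → ℕ) //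
      (∀ i, t.1 i + t.2.1 i + t.2.2 i = u i) ∧
      ¬ (∃ i k, i < k ∧ 1 ≤ t.1 i ∧ 1 ≤ t.2.1 k) ∧
      ¬ (∃ i j k, i < j ∧ j < k ∧ 1 ≤ t.1 i ∧ 1 ≤ t.2.2 j ∧ 1 ≤ t.1 k) ∧
      ¬ (∃ i j k, i < j ∧ j < k ∧ 1 ≤ t.2.1 i ∧ 1 ≤ t.2.2 j ∧ 1 ≤ t.2.1 k) ∧
      ¬ (∃ i j k, i < j ∧ j < k ∧ 1 ≤ t.2.1 i ∧ 1 ≤ t.2.2 j ∧ 1 ≤ t.1 k)} =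
    Nat.choose (∑ i, u i + 3) 3 - ∑ i, Nat.choose (u i + 2) 3 := by
  classical
  have e : {t : Stmt2Aux.Tri n // Stmt2Aux.Std u t} ≃ {s // s ∈ Stmt2Aux.Good u} :=
    { toFun := fun t => ⟨Stmt2Aux.psi u t.1, Stmt2Aux.psi_good u t.2⟩
      invFun := fun s => ⟨Stmt2Aux.phi u s.1.1 s.1.2.1 s.1.2.2, Stmt2Aux.phi_std u _ _ _⟩
      left_inv := fun t => Subtype.ext (Stmt2Aux.phi_psi u t.2)
      right_inv := fun s => Subtype.ext (Stmt2Aux.psi_phi u s.2) }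
  have h1 : Nat.card {t : Stmt2Aux.Tri n // Stmt2Aux.Std u t}
      = Nat.card {s // s ∈ Stmt2Aux.Good u} := Nat.card_congr e
  have h2 : Nat.card {s // s ∈ Stmt2Aux.Good u} = (Stmt2Aux.Good u).card :=
    Nat.card_eq_finsetCard _
  exact h1.trans (h2.trans (Stmt2Aux.card_Good u))
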